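/- Let Δ be a bounded, co-bounded m-invariant set and w ∈ [m]^n with w · Δ = Δ + n. Then at each step i, the element removed from Δ^{(i)} = w_{i-1} ⋯ w_0 · Δ by the letter w_i is an n-generator of Δ^{(i)}, i.e., the removed element x satisfies x − n ∉ Δ^{(i)}. -/

import Mathlib

/-- The shift of a set of integers: `Δ + k`. -/
def shiftSet (Δ : Set ℤ) (k : ℤ) : Set ℤ := (· + k) '' Δ

/-- `Δ` is `k`-invariant if `Δ + k ⊆ Δ`. -/
def Invariant (k : ℤ) (Δ : Set ℤ) : Prop := shiftSet Δ k ⊆ Δ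

/-- `Δ` is bounded (has a minimum element). -/
def HasMin (Δ : Set ℤ) : Prop := ∃ a ∈ Δ, ∀ x ∈ Δ, a ≤ x

/-- `Δ` is co-bounded: contains all sufficiently large integers. -/
def CoBounded (Δ : Set ℤ) : Prop := ∃ N : ℤ, ∀ x : ℤ, N ≤ x → x ∈ Δ

/-- The `k`-generators of `Δ`: elements `a ∈ Δ` with `a - k ∉ Δ`, i.e. `Δ \ (Δ + k)`. -/
def gens (k : ℤ) (Δ : Set ℤ) : Set ℤ := Δ \ shiftSet Δ k

/-- The `(j+1)`-st smallest element of a set of integers. -/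
noncomputable def nthSmallest : ℕ → Set ℤ → ℤ
  | 0, S => sInf S
  | j+1, S => nthSmallest j (S \ {sInf S})

/-- The letter `j ∈ [m]` acts on an `m`-invariant set by removing its `(j+1)`-st
smallest `m`-generator. -/
noncomputable def letterAct (m : ℤ) (j : ℕ) (Δ : Set ℤ) : Set ℤ :=
  Δ \ {nthSmallest j (gens m Δ)}

/-- `steps m p Δ i = p_{i-1} ⋯ p_1 p_0 ⋅ Δ`: the word acts one letter at a
time, the letter `p 0` (rightmost) acting first. -/
noncomputable def steps (m : ℤ) (p : ℕ → ℕ) (Δ : Set ℤ) : ℕ → Set ℤ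
  | 0 => Δ
  | i+1 => letterAct m (p i) (steps m p Δ i)

lemma mem_shiftSet {Δ : Set ℤ} {k x : ℤ} : x ∈ shiftSet Δ k ↔ x - k ∈ Δ := by
  constructor
  · rintro ⟨a, ha, rfl⟩; simpa using ha
  · intro h; exact ⟨x - k, h, by ring⟩

lemma nth_mem : ∀ (j : ℕ) (S : Set ℤ), S.Finite → j < S.ncard → nthSmallest j S ∈ S := by
  intro j
  induction j with
  | zero =>
    intro S hfin h
    have hne : S.Nonempty := Set.nonempty_of_ncard_ne_zero (by omega)
    exact Int.csInf_mem hne (hfin.bddBelow)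
  | succ j ih =>
    intro S hfin h
    have hne : S.Nonempty := Set.nonempty_of_ncard_ne_zero (by omega)
    have hmem : sInf S ∈ S := Int.csInf_mem hne hfin.bddBelow
    have hcard : (S \ {sInf S}).ncard = S.ncard - 1 := Set.ncard_diff_singleton_of_mem hmem
    have := ih (S \ {sInf S}) hfin.diff (by omega)
    exact this.1

lemma gens_finite {m : ℤ} (hm : 0 < m) {Δ : Set ℤ} (hb : BddBelow Δ) (hc : CoBounded Δ) :
    (gens m Δ).Finite := by
  obtain ⟨a, ha⟩ := hb
  obtain ⟨N, hN⟩ := hc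
  apply Set.Finite.subset (Set.finite_Icc a (N + m))
  rintro x ⟨hx, hnx⟩
  refine ⟨ha hx, ?_⟩
  by_contra h
  exact hnx (mem_shiftSet.2 (hN _ (by omega)))

lemma le_ncard_gens {m : ℤ} (hm : 0 < m) {Δ : Set ℤ} (hI : Invariant m Δ)
    (hb : BddBelow Δ) (hc : CoBounded Δ) : m.toNat ≤ (gens m Δ).ncard := by
  obtain ⟨N, hN⟩ := hc
  set C : ℤ → Set ℤ := fun r => {x ∈ Δ | x % m = r} with hC
  have hCne : ∀ r ∈ Set.Ico (0:ℤ) m, (C r).Nonempty := by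
    rintro r ⟨hr0, hrm⟩
    refine ⟨r + m * (N.natAbs + 1), ⟨hN _ ?_, ?_⟩⟩
    · have : (N.natAbs : ℤ) + 1 ≤ m * (N.natAbs + 1) := by nlinarith
      have h2 : N ≤ (N.natAbs : ℤ) := Int.le_natAbs
      omega
    · rw [Int.add_mul_emod_self_left, Int.emod_eq_of_lt hr0 hrm]
  set g : ℤ → ℤ := fun r => sInf (C r) with hg
  have hCbdd : ∀ r, BddBelow (C r) := fun r => hb.mono (fun x hx => hx.1)
  have hgmem : ∀ r ∈ Set.Ico (0:ℤ) m, g r ∈ C r := fun r hr =>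
    Int.csInf_mem (hCne r hr) (hCbdd r)
  have hggen : ∀ r ∈ Set.Ico (0:ℤ) m, g r ∈ gens m Δ := by
    intro r hr
    obtain ⟨hgΔ, hgmod⟩ := hgmem r hr
    refine ⟨hgΔ, fun hsh => ?_⟩
    have h1 : g r - m ∈ Δ := mem_shiftSet.1 hsh
    have hmod : (g r - m) % m = g r % m := by
      rw [Int.sub_emod, Int.emod_self, sub_zero, Int.emod_emod_of_dvd _ dvd_rfl]
    have h2 : g r - m ∈ C r := ⟨h1, by rw [hmod]; exact hgmod⟩
    have h3 : g r ≤ g r - m := csInf_le (hCbdd r) h2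
    omega
  have hinj : Set.InjOn g (Set.Ico (0:ℤ) m) := by
    intro r hr s hs hgs
    have h1 := (hgmem r hr).2
    have h2 := (hgmem s hs).2
    rw [← h1, hgs, h2]
  have himg : g '' Set.Ico (0:ℤ) m ⊆ gens m Δ := by
    rintro _ ⟨r, hr, rfl⟩; exact hggen r hr
  have hfin : (gens m Δ).Finite := gens_finite hm hb ⟨N, hN⟩
  have := Set.ncard_le_ncard himg hfin
  rwa [Set.ncard_image_of_injOn hinj, ← Finset.coe_Ico, Set.ncard_coe_finset,
    Int.card_Ico, sub_zero] at this

lemma steps_succ_subset (m : ℤ) (p : ℕ → ℕ) (Δ : Set ℤ) (i : ℕ) :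
    steps m p Δ (i+1) ⊆ steps m p Δ i := Set.diff_subset

lemma steps_antitone (m : ℤ) (p : ℕ → ℕ) (Δ : Set ℤ) {i j : ℕ} (h : i ≤ j) :
    steps m p Δ j ⊆ steps m p Δ i := by
  induction j with
  | zero => simpa [Nat.le_zero.1 h] using subset_rfl
  | succ j ih =>
    rcases Nat.lt_or_ge i (j+1) with h' | h'
    · exact (steps_succ_subset m p Δ j).trans (ih (by omega))
    · have : i = j + 1 := by omega
      simp [this]

/-- If `w ⋅ Δ = Δ + n`, then at each step the element removed from
`Δ^{(i)} = w_{i-1} ⋯ w_0 ⋅ Δ` by the letter `w_i` is an `n`-generator of `Δ^{(i)}`. -/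
theorem removed_is_n_generator (m n : ℕ) (hm : 0 < m) (hn : 0 < n) (Δ : Set ℤ)
    (hI : Invariant m Δ) (hb : HasMin Δ) (hc : CoBounded Δ)
    (p : ℕ → ℕ) (hp : ∀ i < n, p i < m)
    (hact : steps m p Δ n = shiftSet Δ n) :
    ∀ i < n,
      nthSmallest (p i) (gens m (steps m p Δ i)) ∈ steps m p Δ i ∧
      nthSmallest (p i) (gens m (steps m p Δ i)) - n ∉ steps m p Δ i := by
  obtain ⟨a, haΔ, ha⟩ := hb
  have hmZ : (0:ℤ) < (m:ℤ) := by exact_mod_cast hm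
  -- Good i: invariance, coboundedness, subset of Δ
  have good : ∀ i ≤ n, Invariant m (steps m p Δ i) ∧ CoBounded (steps m p Δ i) ∧
      steps m p Δ i ⊆ Δ := by
    intro i hi
    induction i with
    | zero => exact ⟨hI, hc, subset_rfl⟩
    | succ i ih =>
      obtain ⟨hIi, hci, hsi⟩ := ih (by omega)
      have hbdd : BddBelow (steps m p Δ i) := ⟨a, fun x hx => ha x (hsi hx)⟩
      set x := nthSmallest (p i) (gens m (steps m p Δ i)) with hx
      have hxg : x ∈ gens m (steps m p Δ i) := by
        apply nth_mem _ _ (gens_finite hmZ hbdd hci)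
        have h1 := le_ncard_gens hmZ hIi hbdd hci
        have h2 := hp i (by omega)
        omega
      obtain ⟨N, hN⟩ := hci
      refine ⟨?_, ⟨max N (x+1), fun y hy => ?_⟩, fun y hy => hsi hy.1⟩
      · -- invariance
        rintro z hz
        have hz' : z - m ∈ steps m p Δ (i+1) := by
          rcases mem_shiftSet.1 hz with h
          exact h
        obtain ⟨hz1, hz2⟩ := hz'
        have hzΔ : z ∈ steps m p Δ i := hIi (mem_shiftSet.2 hz1)
        refine ⟨hzΔ, fun hzx => ?_⟩
        rw [Set.mem_singleton_iff] at hzx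
        rw [hzx] at hz1
        exact hxg.2 (mem_shiftSet.2 hz1)
      · -- coboundedness
        refine ⟨hN y (le_trans (le_max_left _ _) hy), fun hyx => ?_⟩
        rw [Set.mem_singleton_iff] at hyx
        have := le_trans (le_max_right N (x+1)) hy
        omega
  intro i hi
  obtain ⟨hIi, hci, hsi⟩ := good i (by omega)
  have hbdd : BddBelow (steps m p Δ i) := ⟨a, fun x hx => ha x (hsi hx)⟩
  set x := nthSmallest (p i) (gens m (steps m p Δ i)) with hx
  have hxg : x ∈ gens m (steps m p Δ i) := by
    apply nth_mem _ _ (gens_finite hmZ hbdd hci)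
    have h1 := le_ncard_gens hmZ hIi hbdd hci
    have h2 := hp i hi
    omega
  refine ⟨hxg.1, fun hcon => ?_⟩
  -- x was removed at step i+1, so x ∉ steps n = Δ + n, hence x - n ∉ Δ
  have hxnot : x ∉ steps m p Δ (i+1) := fun h => h.2 rfl
  have hxnotn : x ∉ steps m p Δ n := fun h => hxnot (steps_antitone m p Δ (by omega) h)
  rw [hact] at hxnotn
  exact hxnotn (mem_shiftSet.2 (hsi hcon))
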